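/- Let σ ∈ (0,1) and 0 < τ' < τ. Then for every K > 1 and all ξ, η ∈ ℝ^d with |ξ − η| ≤ |η|/K, one has exp( τ'⟨ξ⟩^σ − τ⟨η⟩^σ ) ≤ exp( −( τ − (1 + K^σ − (K−1)^σ)·τ' ) · ⟨η⟩^σ ). In particular, if K is large enough (depending only on σ, τ, τ') then τ − (1 + K^σ − (K−1)^σ)·τ' > 0 and the left-hand side is bounded by a decaying Gaussian-type weight in ⟨η⟩^σ. -/

import Mathlib

open MeasureTheory Real
open scoped FourierTransform ENNReal
open Filter

noncomputable section

/-- `ℝ^d` as a Euclidean space. -/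
abbrev E (d : ℕ) := EuclideanSpace ℝ (Fin d)

/-- The Japanese bracket `⟨ξ⟩ = (1 + |ξ|²)^{1/2}`. -/
def jap {d : ℕ} (ξ : E d) : ℝ := Real.sqrt (1 + ‖ξ‖ ^ 2)

lemma one_le_jap {d : ℕ} (ξ : E d) : 1 ≤ jap ξ := by
  rw [jap]
  exact (Real.le_sqrt zero_le_one (by positivity)).mpr (by nlinarith [sq_nonneg ‖ξ‖])

lemma norm_le_jap {d : ℕ} (ξ : E d) : ‖ξ‖ ≤ jap ξ := by
  rw [jap]
  exact (Real.le_sqrt (norm_nonneg _) (by positivity)).mpr (by nlinarith)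

lemma jap_le {d : ℕ} (ξ η : E d) : jap ξ ≤ jap η + ‖ξ - η‖ := by
  have h1 : ‖ξ‖ ≤ ‖η‖ + ‖ξ - η‖ := by
    have := norm_sub_norm_le ξ η
    linarith [abs_le.mp (abs_norm_sub_norm_le ξ η)]
  have h2 : 0 ≤ jap η := Real.sqrt_nonneg _
  have h3 : ‖η‖ ≤ jap η := norm_le_jap η
  have h4 : jap η ^ 2 = 1 + ‖η‖ ^ 2 := Real.sq_sqrt (by positivity)
  rw [jap]
  have h5 : 1 + ‖ξ‖ ^ 2 ≤ (jap η + ‖ξ - η‖) ^ 2 := by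
    nlinarith [norm_nonneg ξ, norm_nonneg η, norm_nonneg (ξ - η)]
  calc Real.sqrt (1 + ‖ξ‖ ^ 2) ≤ Real.sqrt ((jap η + ‖ξ - η‖) ^ 2) :=
        Real.sqrt_le_sqrt h5
    _ = jap η + ‖ξ - η‖ := Real.sqrt_sq (by positivity)

/-- Estimate of the exponential weight in the region
`|ξ−η| ≤ |η|/K`: `exp(τ'⟨ξ⟩^σ − τ⟨η⟩^σ) ≤ exp(−(τ − (1 + K^σ − (K−1)^σ)τ')⟨η⟩^σ)`;
and for `K` large enough (depending only on `σ, τ, τ'`) the coefficient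
`τ − (1 + K^σ − (K−1)^σ)τ'` is positive. -/
theorem stmt_12 (σ τ' τ : ℝ) (hσ0 : 0 < σ) (hσ1 : σ < 1)
    (hτ'0 : 0 < τ') (hτ'τ : τ' < τ) :
    (∀ (K : ℝ), 1 < K → ∀ (d : ℕ) (ξ η : E d), ‖ξ - η‖ ≤ ‖η‖ / K →
      Real.exp (τ' * jap ξ ^ σ - τ * jap η ^ σ)
        ≤ Real.exp (-(τ - (1 + K ^ σ - (K - 1) ^ σ) * τ') * jap η ^ σ)) ∧
    ∃ K₀ : ℝ, 1 < K₀ ∧ ∀ K : ℝ, K₀ ≤ K →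
      0 < τ - (1 + K ^ σ - (K - 1) ^ σ) * τ' := by
  constructor
  · intro K hK d ξ η hle
    have hK0 : (0:ℝ) < K := lt_trans one_pos hK
    -- key scalar inequality: (1+1/K)^σ ≤ 1 + K^σ - (K-1)^σ
    have bern1 : (1 + 1/K) ^ σ ≤ 1 + σ * (1/K) :=
      rpow_one_add_le_one_add_mul_self (le_trans (by norm_num : (-1:ℝ) ≤ 0) (by positivity)) hσ0.le hσ1.le
    have bern2 : (1 + (-(1/K))) ^ σ ≤ 1 + σ * (-(1/K)) := by
      apply rpow_one_add_le_one_add_mul_self _ hσ0.le hσ1.le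
      rw [neg_le_neg_iff]
      exact div_le_one_of_le₀ hK.le hK0.le
    have hKσ1 : (1:ℝ) ≤ K ^ σ := Real.one_le_rpow hK.le hσ0.le
    have hfact : (K - 1) ^ σ = K ^ σ * (1 - 1/K) ^ σ := by
      rw [← Real.mul_rpow hK0.le (by rw [sub_nonneg]; exact div_le_one_of_le₀ hK.le hK0.le)]
      congr 1
      field_simp
    have key : (1 + 1/K) ^ σ ≤ 1 + K ^ σ - (K - 1) ^ σ := by
      have h2 : (K - 1) ^ σ ≤ K ^ σ * (1 - σ/K) := by
        rw [hfact]
        apply mul_le_mul_of_nonneg_left _ (by positivity)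
        have := bern2
        rw [show (1 + -(1/K)) = 1 - 1/K by ring] at this
        calc (1 - 1/K) ^ σ ≤ 1 + σ * (-(1/K)) := by rw [show (1 - 1/K) = 1 + -(1/K) by ring]; exact bern2
          _ = 1 - σ/K := by ring
      have h3 : σ/K ≤ K ^ σ * (σ/K) := le_mul_of_one_le_left (by positivity) hKσ1
      calc (1 + 1/K) ^ σ ≤ 1 + σ * (1/K) := bern1
        _ = 1 + σ/K := by ring
        _ ≤ 1 + K ^ σ * (σ/K) := by linarith
        _ = 1 + K ^ σ - K ^ σ * (1 - σ/K) := by ring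
        _ ≤ 1 + K ^ σ - (K - 1) ^ σ := by linarith
    -- ⟨ξ⟩ ≤ ⟨η⟩(1 + 1/K)
    have hjap : jap ξ ≤ jap η * (1 + 1/K) := by
      calc jap ξ ≤ jap η + ‖ξ - η‖ := jap_le ξ η
        _ ≤ jap η + ‖η‖ / K := by linarith [jap_le ξ η]
        _ ≤ jap η + jap η / K := by
            gcongr
            exact norm_le_jap η
        _ = jap η * (1 + 1/K) := by ring
    have hξσ : jap ξ ^ σ ≤ (1 + K ^ σ - (K - 1) ^ σ) * jap η ^ σ := by
      have h0ξ : 0 ≤ jap ξ := Real.sqrt_nonneg _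
      have h0η : 0 ≤ jap η := Real.sqrt_nonneg _
      calc jap ξ ^ σ ≤ (jap η * (1 + 1/K)) ^ σ :=
            Real.rpow_le_rpow h0ξ hjap hσ0.le
        _ = jap η ^ σ * (1 + 1/K) ^ σ := Real.mul_rpow h0η (by positivity)
        _ ≤ jap η ^ σ * (1 + K ^ σ - (K - 1) ^ σ) := by
            apply mul_le_mul_of_nonneg_left key (by positivity)
        _ = (1 + K ^ σ - (K - 1) ^ σ) * jap η ^ σ := by ring
    apply Real.exp_le_exp.mpr
    nlinarith [hξσ]
  · -- Part 2
    have hg : Tendsto (fun K : ℝ => K ^ σ - (K - 1) ^ σ) atTop (nhds 0) := by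
      have hup : Tendsto (fun K : ℝ => σ * (K - 1) ^ (σ - 1)) atTop (nhds 0) := by
        have h1 : Tendsto (fun K : ℝ => (K - 1) ^ (-(1 - σ))) atTop (nhds 0) :=
          (tendsto_rpow_neg_atTop (by linarith)).comp (tendsto_atTop_add_const_right _ _ tendsto_id)
        have h2 : Tendsto (fun K : ℝ => σ * (K - 1) ^ (-(1 - σ))) atTop (nhds (σ * 0)) :=
          h1.const_mul σ
        rw [mul_zero] at h2
        convert h2 using 2 with K
        ring_nf
      apply tendsto_of_tendsto_of_tendsto_of_le_of_le' tendsto_const_nhds hup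
      · filter_upwards [eventually_ge_atTop (2:ℝ)] with K hK
        have : (K - 1) ^ σ ≤ K ^ σ := Real.rpow_le_rpow (by linarith) (by linarith) hσ0.le
        linarith
      · filter_upwards [eventually_ge_atTop (2:ℝ)] with K hK
        -- K^σ ≤ (K-1)^σ + σ(K-1)^(σ-1)
        have hK1 : (0:ℝ) < K - 1 := by linarith
        have bern : (1 + 1/(K-1)) ^ σ ≤ 1 + σ * (1/(K-1)) :=
          rpow_one_add_le_one_add_mul_self ((by norm_num : (-1:ℝ) ≤ 0).trans (by positivity)) hσ0.le hσ1.le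
        have hfact : K ^ σ = (K - 1) ^ σ * (1 + 1/(K-1)) ^ σ := by
          rw [← Real.mul_rpow hK1.le (by positivity)]
          congr 1
          field_simp
          ring
        have hsub : (K - 1) ^ σ * (1/(K-1)) = (K - 1) ^ (σ - 1) := by
          rw [Real.rpow_sub hK1, Real.rpow_one]
          field_simp
        calc K ^ σ - (K - 1) ^ σ = (K-1)^σ * ((1 + 1/(K-1)) ^ σ - 1) := by rw [hfact]; ring
          _ ≤ (K-1)^σ * (σ * (1/(K-1))) := by
              apply mul_le_mul_of_nonneg_left _ (by positivity)
              linarith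
          _ = σ * ((K-1)^σ * (1/(K-1))) := by ring
          _ = σ * (K - 1) ^ (σ - 1) := by rw [hsub]
    have hT : Tendsto (fun K : ℝ => τ - (1 + (K ^ σ - (K - 1) ^ σ)) * τ') atTop
        (nhds (τ - (1 + 0) * τ')) :=
      tendsto_const_nhds.sub (((hg.const_add 1).mul_const τ'))
    have hpos : ∀ᶠ K in (atTop : Filter ℝ), 0 < τ - (1 + (K ^ σ - (K - 1) ^ σ)) * τ' :=
      hT.eventually (eventually_gt_nhds (by nlinarith))
    obtain ⟨a, ha⟩ := eventually_atTop.mp hpos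
    refine ⟨max a 2, lt_of_lt_of_le one_lt_two (le_max_right _ _), fun K hK => ?_⟩
    have := ha K (le_trans (le_max_left a 2) hK)
    linarith [this]
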